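/- (Corollary 4, achievability) Let β > 0, let C₁, …, C₅ ≥ 0, a, d > 0, and set α = (β + 2)/(2β + 2), η = 1/(2β + 2), a_i = a·i^{−α}, δ_i = d·i^{−η}. Define H(n) = C₁/(n a_n) + (C₂/n)·Σ_{i=1}^n a_i δ_i^{−2} + (C₃/n)·Σ_{i=1}^n a_i + (C₄/n)·Σ_{i=1}^n a_i δ_i^{2β} + (C₅/n)·Σ_{i=1}^n δ_i^{β}. Then there exists a constant C > 0 such that H(n) ≤ C·n^{−β/(2β+2)} for all n ≥ 1. In particular the bound decays at rate n^{−1/4} for β = 1 (one-sided differences) and n^{−1/3} for β = 2 (symmetric differences). -/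

import Mathlib

open Finset Real

/-- Key summation bound: for `0 < r < 1`, `∑_{i=1}^n i^{-r} ≤ n^{1-r}/(1-r)`. -/
lemma sum_rpow_neg_le (r : ℝ) (h0 : 0 < r) (h1 : r < 1) (n : ℕ) :
    ∑ i ∈ Finset.Icc 1 n, (i : ℝ) ^ (-r) ≤ (1 / (1 - r)) * (n : ℝ) ^ (1 - r) := by
  induction n with
  | zero =>
      simp [Real.zero_rpow (by linarith : (1 : ℝ) - r ≠ 0)]
  | succ n ih =>
      rw [Finset.sum_Icc_succ_top (Nat.one_le_iff_ne_zero.mpr (Nat.succ_ne_zero n))]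
      have hn1 : (0 : ℝ) < (n : ℝ) + 1 := by positivity
      have key : (n : ℝ) ^ (1 - r) ≤ ((n : ℝ) + 1) ^ (1 - r)
          - (1 - r) * ((n : ℝ) + 1) ^ (-r) := by
        have hs : (-1 : ℝ) ≤ -(1 / ((n : ℝ) + 1)) := by
          rw [neg_le_neg_iff]
          rw [div_le_one hn1]; linarith
        have hb := rpow_one_add_le_one_add_mul_self hs (by linarith : (0:ℝ) ≤ 1 - r)
          (by linarith : (1:ℝ) - r ≤ 1)
        have hx : (1 : ℝ) + -(1 / ((n : ℝ) + 1)) = (n : ℝ) / ((n : ℝ) + 1) := by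
          field_simp; ring
        rw [hx] at hb
        have hmul := mul_le_mul_of_nonneg_left hb
          (le_of_lt (Real.rpow_pos_of_pos hn1 (1 - r)))
        have hL : ((n:ℝ) + 1) ^ (1 - r) * ((n : ℝ) / ((n : ℝ) + 1)) ^ (1 - r)
            = (n : ℝ) ^ (1 - r) := by
          rw [← Real.mul_rpow (le_of_lt hn1) (by positivity)]
          congr 1
          field_simp
        have hR : ((n:ℝ) + 1) ^ (1 - r) * (1 + (1 - r) * -(1 / ((n : ℝ) + 1)))
            = ((n : ℝ) + 1) ^ (1 - r) - (1 - r) * ((n : ℝ) + 1) ^ (-r) := by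
          have h2 : ((n:ℝ) + 1) ^ (1 - r) * (1 / ((n:ℝ) + 1))
              = ((n : ℝ) + 1) ^ (-r) := by
            rw [one_div, ← Real.rpow_neg_one ((n:ℝ)+1), ← Real.rpow_add hn1]
            congr 1; ring
          ring_nf
          ring_nf at h2
          rw [mul_comm] at h2
          nlinarith [h2]
        rw [hL, hR] at hmul
        exact hmul
      have h1r : (0:ℝ) < 1 - r := by linarith
      have : (1 / (1 - r)) * (n : ℝ) ^ (1 - r) + ((n : ℝ) + 1) ^ (-r)
          ≤ (1 / (1 - r)) * ((n : ℝ) + 1) ^ (1 - r) := by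
        have := mul_le_mul_of_nonneg_left key (by positivity : (0:ℝ) ≤ 1 / (1 - r))
        have hc : (1 / (1 - r)) * ((1 - r) * ((n : ℝ) + 1) ^ (-r))
            = ((n : ℝ) + 1) ^ (-r) := by
          field_simp
        nlinarith [this]
      push_cast
      linarith [ih]

/-- Generic bound for the averaged-sum terms. -/
lemma md_term_bound (c s r : ℝ) (hc : 0 ≤ c) (h0 : 0 < r) (h1 : r < 1) (hrs : r ≤ s)
    (n : ℕ) (hn : 1 ≤ n) :
    c / n * ∑ i ∈ Finset.Icc 1 n, (i : ℝ) ^ (-s)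
      ≤ (c * (1 / (1 - r))) * (n : ℝ) ^ (-r) := by
  have hn0 : (0 : ℝ) < (n : ℝ) := by exact_mod_cast hn
  have hsum : ∑ i ∈ Finset.Icc 1 n, (i : ℝ) ^ (-s)
      ≤ ∑ i ∈ Finset.Icc 1 n, (i : ℝ) ^ (-r) := by
    apply Finset.sum_le_sum
    intro i hi
    have hi1 : (1 : ℝ) ≤ (i : ℝ) := by
      exact_mod_cast (Finset.mem_Icc.mp hi).1
    exact Real.rpow_le_rpow_of_exponent_le hi1 (by linarith)
  have h2 := (hsum.trans (sum_rpow_neg_le r h0 h1 n))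
  calc c / n * ∑ i ∈ Finset.Icc 1 n, (i : ℝ) ^ (-s)
      ≤ c / n * ((1 / (1 - r)) * (n : ℝ) ^ (1 - r)) :=
        mul_le_mul_of_nonneg_left h2 (by positivity)
    _ = (c * (1 / (1 - r))) * ((n : ℝ) / n) * (n : ℝ) ^ (-r) := by
        have hpow : (n : ℝ) ^ ((1 : ℝ) - r) = (n : ℝ) * (n : ℝ) ^ (-r) := by
          rw [show (1 : ℝ) - r = 1 + (-r) by ring, Real.rpow_add hn0, Real.rpow_one]
        rw [hpow]; ring
    _ = (c * (1 / (1 - r))) * (n : ℝ) ^ (-r) := by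
        rw [div_self hn0.ne', mul_one]

set_option maxHeartbeats 1000000 in
/-- Corollary 4 (achievability): with `γ = −2` (independent samples),
`α = (β+2)/(2β+2)`, `η = 1/(2β+2)`, `a_i = a i^{−α}`, `δ_i = d i^{−η}`,
the mirror descent error bound `H(n)` decays at rate `n^{−β/(2β+2)}`. -/
theorem md_corollary4_achievability
    (β C₁ C₂ C₃ C₄ C₅ a d : ℝ) (hβ : 0 < β)
    (hC₁ : 0 ≤ C₁) (hC₂ : 0 ≤ C₂) (hC₃ : 0 ≤ C₃) (hC₄ : 0 ≤ C₄) (hC₅ : 0 ≤ C₅)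
    (ha : 0 < a) (hd : 0 < d)
    (α η : ℝ) (hα : α = (β + 2) / (2 * β + 2)) (hη : η = 1 / (2 * β + 2))
    (as δs : ℕ → ℝ)
    (has : ∀ i : ℕ, as i = a * (i : ℝ) ^ (-α))
    (hδs : ∀ i : ℕ, δs i = d * (i : ℝ) ^ (-η))
    (H : ℕ → ℝ)
    (hH : ∀ n : ℕ, H n =
      C₁ / (n * as n)
      + C₂ / n * ∑ i ∈ Finset.Icc 1 n, as i * δs i ^ (-2 : ℝ)
      + C₃ / n * ∑ i ∈ Finset.Icc 1 n, as i
      + C₄ / n * ∑ i ∈ Finset.Icc 1 n, as i * δs i ^ (2 * β)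
      + C₅ / n * ∑ i ∈ Finset.Icc 1 n, δs i ^ β) :
    ∃ C : ℝ, 0 < C ∧ ∀ n : ℕ, 1 ≤ n →
      H n ≤ C * (n : ℝ) ^ (-(β / (2 * β + 2))) := by
  set r : ℝ := β / (2 * β + 2) with hr
  have hden : (0 : ℝ) < 2 * β + 2 := by linarith
  have hr0 : 0 < r := by positivity
  have hr1 : r < 1 := by
    rw [hr, div_lt_one hden]; linarith
  set K : ℝ := 1 / (1 - r) with hK
  have hK0 : 0 ≤ K := by
    have : (0:ℝ) < 1 - r := by linarith
    positivity
  -- exponent identities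
  have hexp1 : (1 : ℝ) - α = r := by
    rw [hα, hr]; field_simp; ring
  have hexp2 : -α + -η * (-2) = -r := by
    rw [hα, hη, hr]; field_simp; ring
  have hexp5 : -η * β = -r := by
    rw [hη, hr]; field_simp
  have hrα : r ≤ α := by
    rw [hα, hr, div_le_div_iff₀ hden hden]; nlinarith
  have h4e : α + 2 * β * η = (3 * β + 2) / (2 * β + 2) := by
    rw [hα, hη]; field_simp; ring
  have hrs4 : r ≤ α + 2 * β * η := by
    rw [h4e, hr, div_le_div_iff₀ hden hden]; nlinarith
  refine ⟨C₁ / a + (C₂ * (a * d ^ (-2 : ℝ))) * K + (C₃ * a) * K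
      + (C₄ * (a * d ^ (2 * β))) * K + (C₅ * d ^ β) * K + 1, ?_, ?_⟩
  · have h1 : 0 ≤ C₁ / a := by positivity
    have h2 : 0 ≤ (C₂ * (a * d ^ (-2 : ℝ))) * K := by positivity
    have h3 : 0 ≤ (C₃ * a) * K := by positivity
    have h4 : 0 ≤ (C₄ * (a * d ^ (2 * β))) * K := by positivity
    have h5 : 0 ≤ (C₅ * d ^ β) * K := by positivity
    linarith
  intro n hn
  have hn0 : (0 : ℝ) < (n : ℝ) := by exact_mod_cast hn
  -- Term 1
  have hT1 : C₁ / (n * as n) = (C₁ / a) * (n : ℝ) ^ (-r) := by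
    rw [has n]
    have h1 : (n : ℝ) * (a * (n : ℝ) ^ (-α)) = a * (n : ℝ) ^ r := by
      rw [← hexp1]
      rw [show (1 : ℝ) - α = 1 + (-α) by ring, Real.rpow_add hn0, Real.rpow_one]
      ring
    rw [h1, Real.rpow_neg hn0.le]
    have hnr : (0:ℝ) < (n : ℝ) ^ r := Real.rpow_pos_of_pos hn0 r
    field_simp
  -- rewrite the sums
  have hS2 : ∑ i ∈ Finset.Icc 1 n, as i * δs i ^ (-2 : ℝ)
      = (a * d ^ (-2 : ℝ)) * ∑ i ∈ Finset.Icc 1 n, (i : ℝ) ^ (-r) := by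
    rw [Finset.mul_sum]
    apply Finset.sum_congr rfl
    intro i hi
    have hi0 : (0 : ℝ) < (i : ℝ) := by
      exact_mod_cast (Finset.mem_Icc.mp hi).1
    rw [has i, hδs i,
      Real.mul_rpow hd.le (Real.rpow_nonneg hi0.le _),
      ← Real.rpow_mul hi0.le]
    rw [show a * (i:ℝ)^(-α) * (d ^ (-2:ℝ) * (i:ℝ)^(-η * (-2:ℝ)))
        = a * d ^ (-2:ℝ) * ((i:ℝ)^(-α) * (i:ℝ)^(-η * (-2:ℝ))) by ring,
      ← Real.rpow_add hi0]
    rw [show -α + -η * (-2:ℝ) = -r from hexp2]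
  have hS3 : ∑ i ∈ Finset.Icc 1 n, as i
      = a * ∑ i ∈ Finset.Icc 1 n, (i : ℝ) ^ (-α) := by
    rw [Finset.mul_sum]
    exact Finset.sum_congr rfl fun i _ => has i
  have hS4 : ∑ i ∈ Finset.Icc 1 n, as i * δs i ^ (2 * β)
      = (a * d ^ (2 * β)) * ∑ i ∈ Finset.Icc 1 n, (i : ℝ) ^ (-(α + 2 * β * η)) := by
    rw [Finset.mul_sum]
    apply Finset.sum_congr rfl
    intro i hi
    have hi0 : (0 : ℝ) < (i : ℝ) := by
      exact_mod_cast (Finset.mem_Icc.mp hi).1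
    rw [has i, hδs i,
      Real.mul_rpow hd.le (Real.rpow_nonneg hi0.le _),
      ← Real.rpow_mul hi0.le]
    rw [show a * (i:ℝ)^(-α) * (d ^ (2*β) * (i:ℝ)^(-η * (2*β)))
        = a * d ^ (2*β) * ((i:ℝ)^(-α) * (i:ℝ)^(-η * (2*β))) by ring,
      ← Real.rpow_add hi0]
    congr 1
    ring
  have hS5 : ∑ i ∈ Finset.Icc 1 n, δs i ^ β
      = d ^ β * ∑ i ∈ Finset.Icc 1 n, (i : ℝ) ^ (-r) := by
    rw [Finset.mul_sum]
    apply Finset.sum_congr rfl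
    intro i hi
    have hi0 : (0 : ℝ) < (i : ℝ) := by
      exact_mod_cast (Finset.mem_Icc.mp hi).1
    rw [hδs i, Real.mul_rpow hd.le (Real.rpow_nonneg hi0.le _),
      ← Real.rpow_mul hi0.le, hexp5]
  -- bound each term
  have hB2 : C₂ / n * ∑ i ∈ Finset.Icc 1 n, as i * δs i ^ (-2 : ℝ)
      ≤ (C₂ * (a * d ^ (-2 : ℝ))) * K * (n : ℝ) ^ (-r) := by
    rw [hS2, show C₂ / n * ((a * d ^ (-2:ℝ)) * ∑ i ∈ Finset.Icc 1 n, (i : ℝ) ^ (-r))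
        = (C₂ * (a * d ^ (-2:ℝ))) / n * ∑ i ∈ Finset.Icc 1 n, (i : ℝ) ^ (-r) by ring]
    exact md_term_bound _ r r (by positivity) hr0 hr1 le_rfl n hn
  have hB3 : C₃ / n * ∑ i ∈ Finset.Icc 1 n, as i
      ≤ (C₃ * a) * K * (n : ℝ) ^ (-r) := by
    rw [hS3, show C₃ / n * (a * ∑ i ∈ Finset.Icc 1 n, (i : ℝ) ^ (-α))
        = (C₃ * a) / n * ∑ i ∈ Finset.Icc 1 n, (i : ℝ) ^ (-α) by ring]
    exact md_term_bound _ α r (by positivity) hr0 hr1 hrα n hn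
  have hB4 : C₄ / n * ∑ i ∈ Finset.Icc 1 n, as i * δs i ^ (2 * β)
      ≤ (C₄ * (a * d ^ (2 * β))) * K * (n : ℝ) ^ (-r) := by
    rw [hS4, show C₄ / n * ((a * d ^ (2*β)) * ∑ i ∈ Finset.Icc 1 n, (i : ℝ) ^ (-(α + 2*β*η)))
        = (C₄ * (a * d ^ (2*β))) / n * ∑ i ∈ Finset.Icc 1 n, (i : ℝ) ^ (-(α + 2*β*η)) by ring]
    exact md_term_bound _ (α + 2*β*η) r (by positivity) hr0 hr1 hrs4 n hn
  have hB5 : C₅ / n * ∑ i ∈ Finset.Icc 1 n, δs i ^ β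
      ≤ (C₅ * d ^ β) * K * (n : ℝ) ^ (-r) := by
    rw [hS5, show C₅ / n * (d ^ β * ∑ i ∈ Finset.Icc 1 n, (i : ℝ) ^ (-r))
        = (C₅ * d ^ β) / n * ∑ i ∈ Finset.Icc 1 n, (i : ℝ) ^ (-r) by ring]
    exact md_term_bound _ r r (by positivity) hr0 hr1 le_rfl n hn
  have hnr0 : (0 : ℝ) ≤ (n : ℝ) ^ (-r) := Real.rpow_nonneg hn0.le _
  rw [hH n, hT1]
  nlinarith [hB2, hB3, hB4, hB5, hnr0]
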